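/- arXiv:1803.10998 — 2 statements merged into one kernel-verified Lean document; each statement's English description precedes it below -/
import Mathlib

section
/- Conditionally Variational approximation (CVA) optimality: fix a conditional density f̃*(θ_{\k}|θ_k). Among all joint densities f̃ = f̃*(θ_{\k}|θ_k) f̃_k(θ_k) with free marginal f̃_k, the KL divergence KL(f̃‖f) is minimized by f̃*_k(θ_k) ∝ f_k(θ_k) · exp(−KL(f̃*(·|θ_k) ‖ f(·|θ_k))), and the minimum value equals −log ζ_k where ζ_k is the normalizing constant of f̃*_k. -/
open MeasureTheory
open scoped BigOperators


lemma gibbs_pt {t s : ℝ} (ht : 0 ≤ t) (hs : 0 < s) : t - s ≤ t * Real.log (t / s) := by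
  rcases eq_or_lt_of_le ht with h | h
  · simp [← h]; positivity
  · have hlog := Real.log_le_sub_one_of_pos (show (0:ℝ) < s / t by positivity)
    rw [Real.log_div hs.ne' h.ne'] at hlog
    rw [Real.log_div h.ne' hs.ne']
    have hst : t * (s / t) = s := by field_simp
    nlinarith

lemma cva_slice {A B : Type*} [MeasurableSpace A] [MeasurableSpace B]
    (μ : Measure A) (ν : Measure B) [SigmaFinite μ] [SigmaFinite ν]
    (f : A × B → ℝ) (fk : A → ℝ) (fc : A → B → ℝ) (ftc : A → B → ℝ)
    (hf_pos : ∀ x, 0 < f x) (hfk_pos : ∀ a, 0 < fk a)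
    (hfc : ∀ a b, fc a b = f (a, b) / fk a)
    (hftc_pos : ∀ a b, 0 < ftc a b) (hftc_int : ∀ a, ∫ b, ftc a b ∂ν = 1)
    (KLc : A → ℝ)
    (hKLc : ∀ a, KLc a = ∫ b, ftc a b * Real.log (ftc a b / fc a b) ∂ν)
    (ζ : ℝ) (hζ_pos : 0 < ζ)
    (ftkstar : A → ℝ) (hstar : ∀ a, ftkstar a = fk a * Real.exp (-(KLc a)) / ζ)
    (hint_star : Integrable (fun x : A × B => ftc x.1 x.2 * ftkstar x.1 *
        Real.log (ftc x.1 x.2 * ftkstar x.1 / f x)) (μ.prod ν))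
    (ftk : A → ℝ) (hftk0 : ∀ a, 0 ≤ ftk a) :
    ∀ᵐ a ∂μ, (∫ b, ftc a b * ftk a * Real.log (ftc a b * ftk a / f (a, b)) ∂ν)
      = ftk a * Real.log (ftk a / ftkstar a) - ftk a * Real.log ζ := by
  have hstar_pos : ∀ a, 0 < ftkstar a := fun a => by
    rw [hstar]; have := hfk_pos a; positivity
  filter_upwards [hint_star.prod_right_ae] with a ha
  by_cases h0 : ftk a = 0
  · simp [h0]
  have hc : 0 < ftk a := (hftk0 a).lt_of_ne (Ne.symm h0)
  have hftc_i : Integrable (fun b => ftc a b) ν := by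
    by_contra hni
    have := hftc_int a
    rw [integral_undef hni] at this
    norm_num at this
  have hs := hstar_pos a
  -- ha : Integrable (fun b => ftc a b * ftkstar a * Real.log (ftc a b * ftkstar a / f (a, b))) ν
  have key : ∀ (c : ℝ), 0 < c → ∀ b, ftc a b * c * Real.log (ftc a b * c / f (a, b))
      = c * (ftc a b * Real.log (ftc a b / fc a b)) + (c * (Real.log c - Real.log (fk a))) * ftc a b := by
    intro c hcpos b
    have h1 : 0 < ftc a b := hftc_pos a b
    have h2 : 0 < f (a, b) := hf_pos (a, b)
    have h3 : 0 < fk a := hfk_pos a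
    have hfcv : fc a b = f (a, b) / fk a := hfc a b
    have h4 : 0 < fc a b := by rw [hfcv]; positivity
    rw [Real.log_div (by positivity) h2.ne', Real.log_mul h1.ne' hcpos.ne',
      Real.log_div h1.ne' h4.ne', hfcv, Real.log_div h2.ne' h3.ne']
    ring
  have hKL_i : Integrable (fun b => ftc a b * Real.log (ftc a b / fc a b)) ν := by
    have h1 : Integrable (fun b => ftc a b * ftkstar a * Real.log (ftc a b * ftkstar a / f (a, b))
        - (ftkstar a * (Real.log (ftkstar a) - Real.log (fk a))) * ftc a b) ν :=
      ha.sub (hftc_i.const_mul _)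
    have h2 := h1.const_mul (ftkstar a)⁻¹
    apply h2.congr
    filter_upwards with b
    rw [key (ftkstar a) hs b]
    field_simp
    ring
  calc (∫ b, ftc a b * ftk a * Real.log (ftc a b * ftk a / f (a, b)) ∂ν)
      = ∫ b, (ftk a * (ftc a b * Real.log (ftc a b / fc a b))
          + (ftk a * (Real.log (ftk a) - Real.log (fk a))) * ftc a b) ∂ν := by
        exact integral_congr_ae (Filter.Eventually.of_forall fun b => key (ftk a) hc b)
    _ = ftk a * KLc a + (ftk a * (Real.log (ftk a) - Real.log (fk a))) * 1 := by
        rw [integral_add (hKL_i.const_mul _) (hftc_i.const_mul _), integral_const_mul,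
          integral_const_mul, hftc_int a, hKLc a]
    _ = ftk a * Real.log (ftk a / ftkstar a) - ftk a * Real.log ζ := by
        have h3 : 0 < fk a := hfk_pos a
        rw [Real.log_div hc.ne' (hstar_pos a).ne', hstar a,
          Real.log_div (by positivity) hζ_pos.ne', Real.log_mul h3.ne' (Real.exp_pos _).ne',
          Real.log_exp]
        ring

/-- Conditionally Variational approximation (CVA) optimality: with the
conditional `f̃*(θ_{\k}|θ_k)` fixed, the marginal
`f̃*_k(θ_k) = f_k(θ_k) exp(−KL(f̃*(·|θ_k)‖f(·|θ_k))) / ζ_k` attains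
KL divergence `−log ζ_k` to the true joint `f`, and every other free-form
marginal gives a KL divergence at least `−log ζ_k`. -/
theorem cva_optimality {A B : Type*} [MeasurableSpace A] [MeasurableSpace B]
    (μ : Measure A) (ν : Measure B) [SigmaFinite μ] [SigmaFinite ν]
    (f : A × B → ℝ) (fk : A → ℝ) (fc : A → B → ℝ) (ftc : A → B → ℝ)
    (hf_pos : ∀ x, 0 < f x) (hfk_pos : ∀ a, 0 < fk a)
    (hfk : ∀ a, fk a = ∫ b, f (a, b) ∂ν)
    (hfc : ∀ a b, fc a b = f (a, b) / fk a)
    (hftc_pos : ∀ a b, 0 < ftc a b) (hftc_int : ∀ a, ∫ b, ftc a b ∂ν = 1)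
    (KLc : A → ℝ)
    (hKLc : ∀ a, KLc a = ∫ b, ftc a b * Real.log (ftc a b / fc a b) ∂ν)
    (ζ : ℝ) (hζ : ζ = ∫ a, fk a * Real.exp (-(KLc a)) ∂μ) (hζ_pos : 0 < ζ)
    (ftkstar : A → ℝ) (hstar : ∀ a, ftkstar a = fk a * Real.exp (-(KLc a)) / ζ)
    (hint_star : Integrable (fun x : A × B => ftc x.1 x.2 * ftkstar x.1 *
        Real.log (ftc x.1 x.2 * ftkstar x.1 / f x)) (μ.prod ν)) :
    (∫ x : A × B, ftc x.1 x.2 * ftkstar x.1 *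
        Real.log (ftc x.1 x.2 * ftkstar x.1 / f x) ∂(μ.prod ν))
      = -Real.log ζ ∧
    ∀ ftk : A → ℝ, (∀ a, 0 ≤ ftk a) → (∫ a, ftk a ∂μ = 1) →
      Integrable (fun x : A × B => ftc x.1 x.2 * ftk x.1 *
          Real.log (ftc x.1 x.2 * ftk x.1 / f x)) (μ.prod ν) →
      -Real.log ζ ≤ ∫ x : A × B, ftc x.1 x.2 * ftk x.1 *
          Real.log (ftc x.1 x.2 * ftk x.1 / f x) ∂(μ.prod ν) := by
  have hstar_pos : ∀ a, 0 < ftkstar a := fun a => by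
    rw [hstar]; have := hfk_pos a; positivity
  -- ftkstar is integrable with integral 1
  have hbase_i : Integrable (fun a => fk a * Real.exp (-(KLc a))) μ := by
    by_contra hni
    rw [integral_undef hni] at hζ
    exact hζ_pos.ne' (hζ.symm ▸ rfl)
  have hstar_i : Integrable ftkstar μ := by
    apply (hbase_i.div_const ζ).congr
    filter_upwards with a
    rw [hstar a]
  have hstar_int : ∫ a, ftkstar a ∂μ = 1 := by
    have : ∫ a, ftkstar a ∂μ = ∫ a, fk a * Real.exp (-(KLc a)) / ζ ∂μ :=
      integral_congr_ae (Filter.Eventually.of_forall fun a => hstar a)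
    rw [this, integral_div, ← hζ, div_self hζ_pos.ne']
  -- value of the integral for any nonneg marginal, via Fubini and the slice lemma
  have hval : ∀ ftk : A → ℝ, (∀ a, 0 ≤ ftk a) →
      Integrable (fun x : A × B => ftc x.1 x.2 * ftk x.1 *
        Real.log (ftc x.1 x.2 * ftk x.1 / f x)) (μ.prod ν) →
      (∫ x : A × B, ftc x.1 x.2 * ftk x.1 *
          Real.log (ftc x.1 x.2 * ftk x.1 / f x) ∂(μ.prod ν))
        = ∫ a, (ftk a * Real.log (ftk a / ftkstar a) - ftk a * Real.log ζ) ∂μ := by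
    intro ftk hftk0 hint
    rw [MeasureTheory.integral_prod _ hint]
    exact integral_congr_ae (cva_slice μ ν f fk fc ftc hf_pos hfk_pos hfc hftc_pos hftc_int
      KLc hKLc ζ hζ_pos ftkstar hstar hint_star ftk hftk0)
  constructor
  · rw [hval ftkstar (fun a => (hstar_pos a).le) hint_star]
    have : ∫ a, (ftkstar a * Real.log (ftkstar a / ftkstar a) - ftkstar a * Real.log ζ) ∂μ
        = ∫ a, ftkstar a * (-Real.log ζ) ∂μ := by
      apply integral_congr_ae
      filter_upwards with a
      rw [div_self (hstar_pos a).ne', Real.log_one]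
      ring
    rw [this, integral_mul_const, hstar_int, one_mul]
  · intro ftk hftk0 hftk1 hint
    rw [hval ftk hftk0 hint]
    have hftk_i : Integrable ftk μ := by
      by_contra hni
      rw [integral_undef hni] at hftk1
      norm_num at hftk1
    have hψ_i : Integrable (fun a => ftk a * Real.log (ftk a / ftkstar a)
        - ftk a * Real.log ζ) μ := by
      apply (hint.integral_prod_left).congr
      exact cva_slice μ ν f fk fc ftc hf_pos hfk_pos hfc hftc_pos hftc_int
        KLc hKLc ζ hζ_pos ftkstar hstar hint_star ftk hftk0
    have hχ_i : Integrable (fun a => (ftk a - ftkstar a) - ftk a * Real.log ζ) μ :=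
      (hftk_i.sub hstar_i).sub (hftk_i.mul_const _)
    have hle : ∫ a, ((ftk a - ftkstar a) - ftk a * Real.log ζ) ∂μ
        ≤ ∫ a, (ftk a * Real.log (ftk a / ftkstar a) - ftk a * Real.log ζ) ∂μ := by
      apply integral_mono_ae hχ_i hψ_i
      filter_upwards with a
      have := gibbs_pt (hftk0 a) (hstar_pos a)
      linarith
    have e1 : Integrable (fun a => ftk a - ftkstar a) μ := hftk_i.sub hstar_i
    calc -Real.log ζ
        = ∫ a, ((ftk a - ftkstar a) - ftk a * Real.log ζ) ∂μ := by
          rw [integral_sub e1 (hftk_i.mul_const _),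
            integral_sub hftk_i hstar_i, integral_mul_const, hftk1, hstar_int]
          ring
      _ ≤ _ := hle
end

section
/- Pythagorean decomposition for CVA: with the notation above, for any marginal f̃_k, KL(f̃*(·|·)f̃_k ‖ f) = KL(f̃_k ‖ f̃*_k) + log(1/ζ_k), where f̃*_k(θ_k) = (1/ζ_k) f_k(θ_k) exp(−KL(f̃*(·|θ_k) ‖ f(·|θ_k))) and ζ_k is its normalizing constant. In particular KL(f̃‖f) ≥ log(1/ζ_k) with equality iff f̃_k = f̃*_k. -/
open MeasureTheory
open scoped BigOperators

lemma cva_gibbs_aux {x y : ℝ} (hx : 0 ≤ x) (hy : 0 < y) :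
    0 ≤ x * Real.log (x / y) - (x - y) ∧
      (x * Real.log (x / y) - (x - y) = 0 ↔ x = y) := by
  rcases eq_or_lt_of_le hx with h0 | hxpos
  · constructor
    · simp [← h0]; linarith
    · simp [← h0]
      constructor
      · intro h; linarith
      · intro h; linarith
  · by_cases hxy : x = y
    · subst hxy
      simp [div_self hxpos.ne']
    · have hyx : (0:ℝ) < y / x := div_pos hy hxpos
      have h1 : Real.log (y / x) < y / x - 1 :=
        Real.log_lt_sub_one_of_pos hyx (by
          intro h
          apply hxy
          field_simp at h
          linarith)
      have hlog : Real.log (x / y) = -Real.log (y / x) := by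
        rw [← Real.log_inv, inv_div]
      have hxyx : x * (y / x) = y := by field_simp
      have hpos : 0 < x * Real.log (x / y) - (x - y) := by
        rw [hlog]
        nlinarith [mul_lt_mul_of_pos_left h1 hxpos]
      exact ⟨hpos.le, by constructor <;> intro h <;> [linarith; exact absurd h hxy]⟩

/-- Pythagorean decomposition for CVA: with the conditional `f̃*(·|θ_k)` fixed
and `f̃*_k(θ_k) = f_k(θ_k) exp(−KL(f̃*(·|θ_k)‖f(·|θ_k))) / ζ_k`, every free
marginal `f̃_k` satisfies
`KL(f̃*(·|·) f̃_k ‖ f) = KL(f̃_k ‖ f̃*_k) + log(1/ζ_k)`; in particular the KL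
divergence is at least `log(1/ζ_k)`, with equality iff `f̃_k = f̃*_k` (a.e.). -/
theorem cva_pythagorean {A B : Type*} [MeasurableSpace A] [MeasurableSpace B]
    (μ : Measure A) (ν : Measure B) [SigmaFinite μ] [SigmaFinite ν]
    (f : A × B → ℝ) (fk : A → ℝ) (fc : A → B → ℝ) (ftc : A → B → ℝ)
    (hf_pos : ∀ x, 0 < f x) (hfk_pos : ∀ a, 0 < fk a)
    (hfk : ∀ a, fk a = ∫ b, f (a, b) ∂ν)
    (hfc : ∀ a b, fc a b = f (a, b) / fk a)
    (hftc_pos : ∀ a b, 0 < ftc a b) (hftc_int : ∀ a, ∫ b, ftc a b ∂ν = 1)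
    (KLc : A → ℝ)
    (hKLc : ∀ a, KLc a = ∫ b, ftc a b * Real.log (ftc a b / fc a b) ∂ν)
    (ζ : ℝ) (hζ : ζ = ∫ a, fk a * Real.exp (-(KLc a)) ∂μ) (hζ_pos : 0 < ζ)
    (ftkstar : A → ℝ)
    (hstar : ∀ a, ftkstar a = fk a * Real.exp (-(KLc a)) / ζ) :
    ∀ ftk : A → ℝ, (∀ a, 0 ≤ ftk a) → (∫ a, ftk a ∂μ = 1) →
      Integrable (fun x : A × B => ftc x.1 x.2 * ftk x.1 *
          Real.log (ftc x.1 x.2 * ftk x.1 / f x)) (μ.prod ν) →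
      Integrable (fun a => ftk a * Real.log (ftk a / ftkstar a)) μ →
      ((∫ x : A × B, ftc x.1 x.2 * ftk x.1 *
            Real.log (ftc x.1 x.2 * ftk x.1 / f x) ∂(μ.prod ν))
          = (∫ a, ftk a * Real.log (ftk a / ftkstar a) ∂μ)
            + Real.log (1 / ζ)) ∧
      Real.log (1 / ζ) ≤ ∫ x : A × B, ftc x.1 x.2 * ftk x.1 *
            Real.log (ftc x.1 x.2 * ftk x.1 / f x) ∂(μ.prod ν) ∧
      ((∫ x : A × B, ftc x.1 x.2 * ftk x.1 *
            Real.log (ftc x.1 x.2 * ftk x.1 / f x) ∂(μ.prod ν))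
          = Real.log (1 / ζ) ↔ ftk =ᵐ[μ] ftkstar) := by
  intro ftk hftk_nonneg hftk_int hInt2 hInt1
  -- basic integrabilities
  have hIftk : Integrable ftk μ := by
    by_contra h
    rw [integral_undef h] at hftk_int
    norm_num at hftk_int
  have hIg : Integrable (fun a => fk a * Real.exp (-(KLc a))) μ := by
    by_contra h
    rw [integral_undef h] at hζ
    exact absurd hζ hζ_pos.ne'
  have hIstar : Integrable ftkstar μ :=
    (hIg.div_const ζ).congr (Filter.Eventually.of_forall fun a => (hstar a).symm)
  have hstar_pos : ∀ a, 0 < ftkstar a := fun a => by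
    rw [hstar a]
    exact div_pos (mul_pos (hfk_pos a) (Real.exp_pos _)) hζ_pos
  have hstar_int1 : ∫ a, ftkstar a ∂μ = 1 := by
    have : ∫ a, ftkstar a ∂μ = ∫ a, fk a * Real.exp (-(KLc a)) / ζ ∂μ :=
      integral_congr_ae (Filter.Eventually.of_forall fun a => hstar a)
    rw [this, integral_div, ← hζ, div_self hζ_pos.ne']
  have hlogζ : Real.log (1 / ζ) = -Real.log ζ := by
    rw [one_div, Real.log_inv]
  -- inner integral evaluation (a.e. in a)
  have hinner : ∀ᵐ a ∂μ,
      (∫ b, ftc a b * ftk a * Real.log (ftc a b * ftk a / f (a, b)) ∂ν)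
        = ftk a * Real.log (ftk a / ftkstar a) - ftk a * Real.log ζ := by
    filter_upwards [hInt2.prod_right_ae] with a ha
    rcases eq_or_lt_of_le (hftk_nonneg a) with h0 | hpos
    · simp [← h0]
    · have hftcI : Integrable (fun b => ftc a b) ν := by
        by_contra h
        have h1 := hftc_int a
        rw [integral_undef h] at h1
        norm_num at h1
      have hfc_pos : ∀ b, 0 < fc a b := fun b => by
        rw [hfc a b]
        exact div_pos (hf_pos (a, b)) (hfk_pos a)
      set c : ℝ := ftk a * Real.log (ftk a / fk a) with hc
      have key : ∀ b, ftc a b * ftk a * Real.log (ftc a b * ftk a / f (a, b))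
          = ftk a * (ftc a b * Real.log (ftc a b / fc a b)) + c * ftc a b := by
        intro b
        have hfab : f (a, b) = fc a b * fk a := by
          rw [hfc a b, div_mul_cancel₀ _ (hfk_pos a).ne']
        rw [hfab]
        have hsplit : ftc a b * ftk a / (fc a b * fk a)
            = (ftc a b / fc a b) * (ftk a / fk a) := mul_div_mul_comm _ _ _ _
        rw [hsplit, Real.log_mul (div_pos (hftc_pos a b) (hfc_pos b)).ne'
          (div_pos hpos (hfk_pos a)).ne']
        simp only [hc]
        ring
      have hX : Integrable (fun b => ftc a b * Real.log (ftc a b / fc a b)) ν := by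
        have h1 := ((ha.sub (hftcI.const_mul c)).const_mul (ftk a)⁻¹)
        apply h1.congr
        filter_upwards with b
        simp only [Pi.sub_apply]
        rw [key b]
        field_simp
        ring
      calc (∫ b, ftc a b * ftk a * Real.log (ftc a b * ftk a / f (a, b)) ∂ν)
          = ∫ b, ftk a * (ftc a b * Real.log (ftc a b / fc a b)) + c * ftc a b ∂ν :=
            integral_congr_ae (Filter.Eventually.of_forall key)
        _ = ftk a * ∫ b, ftc a b * Real.log (ftc a b / fc a b) ∂ν
              + c * ∫ b, ftc a b ∂ν := by
            rw [integral_add (hX.const_mul (ftk a)) (hftcI.const_mul c),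
              integral_const_mul, integral_const_mul]
        _ = ftk a * KLc a + c := by rw [← hKLc a, hftc_int a, mul_one]
        _ = ftk a * Real.log (ftk a / ftkstar a) - ftk a * Real.log ζ := by
            rw [Real.log_div hpos.ne' (hstar_pos a).ne', hstar a,
              Real.log_div (mul_pos (hfk_pos a) (Real.exp_pos _)).ne' hζ_pos.ne',
              Real.log_mul (hfk_pos a).ne' (Real.exp_pos _).ne', Real.log_exp,
              hc, Real.log_div hpos.ne' (hfk_pos a).ne']
            ring
  -- main equality
  have hmain : (∫ x : A × B, ftc x.1 x.2 * ftk x.1 *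
        Real.log (ftc x.1 x.2 * ftk x.1 / f x) ∂(μ.prod ν))
      = (∫ a, ftk a * Real.log (ftk a / ftkstar a) ∂μ) + Real.log (1 / ζ) := by
    rw [integral_prod _ hInt2, integral_congr_ae hinner,
      integral_sub hInt1 (hIftk.mul_const (Real.log ζ)), integral_mul_const,
      hftk_int, one_mul, hlogζ]
    ring
  -- Gibbs: set K := marginal KL
  set K : ℝ := ∫ a, ftk a * Real.log (ftk a / ftkstar a) ∂μ with hK
  set φ : A → ℝ := fun a =>
    ftk a * Real.log (ftk a / ftkstar a) - (ftk a - ftkstar a) with hφ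
  have hφ_nonneg : ∀ a, 0 ≤ φ a := fun a =>
    (cva_gibbs_aux (hftk_nonneg a) (hstar_pos a)).1
  have hφI : Integrable φ μ := hInt1.sub (hIftk.sub hIstar)
  have hφint : ∫ a, φ a ∂μ = K := by
    have hsub : Integrable (fun a => ftk a - ftkstar a) μ := hIftk.sub hIstar
    have h1 := integral_sub hInt1 hsub
    have h2 := integral_sub hIftk hIstar
    simp only [hφ]
    rw [h1, h2, hftk_int, hstar_int1, hK]
    ring
  have hK_nonneg : 0 ≤ K := hφint ▸ integral_nonneg hφ_nonneg
  have hK_zero_iff : K = 0 ↔ ftk =ᵐ[μ] ftkstar := by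
    rw [← hφint, integral_eq_zero_iff_of_nonneg hφ_nonneg hφI]
    constructor
    · intro h
      filter_upwards [h] with a ha
      exact (cva_gibbs_aux (hftk_nonneg a) (hstar_pos a)).2.mp ha
    · intro h
      filter_upwards [h] with a ha
      exact (cva_gibbs_aux (hftk_nonneg a) (hstar_pos a)).2.mpr ha
  refine ⟨hmain, ?_, ?_⟩
  · rw [hmain]; linarith
  · rw [hmain]
    constructor
    · intro h
      exact hK_zero_iff.mp (by linarith)
    · intro h
      rw [hK_zero_iff.mpr h]
      ring
end
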